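/- Let R be a subring of a commutative ring T with a common ideal C containing a T-regular element, with R ≠ T. If C is a maximal ideal of R (i.e., R/C is a field), then T is not flat as an R-module. -/

import Mathlib

private lemma sum_ulift_two {M : Type*} [AddCommMonoid M] (g : ULift (Fin 2) → M) :
    ∑ i, g i = g ⟨0⟩ + g ⟨1⟩ := by
  rw [← Equiv.sum_comp (Equiv.ulift.symm) g, Fin.sum_univ_two]
  rfl

/-- non-trivial regular conductor situation with `C` maximal as an
ideal of `R`: then `T` is not flat over `R`. -/
theorem stmt_11 (T : Type*) [CommRing T] (R : Subring T) (hRT : R ≠ ⊤) (C : Ideal T)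
    (hCR : (C : Set T) ⊆ (R : Set T))
    (hreg : ∃ c ∈ C, c ∈ nonZeroDivisors T)
    (hmax : (Ideal.comap (algebraMap ↥R T) C).IsMaximal) :
    ¬ Module.Flat ↥R T := by
  intro hflat
  obtain ⟨c, hcC, hcreg⟩ := hreg
  -- pick t ∈ T \ R
  obtain ⟨t, htR⟩ : ∃ t : T, t ∉ R := by
    by_contra h
    push_neg at h
    exact hRT ((Subring.eq_top_iff' R).mpr h)
  have hcR : c ∈ R := hCR hcC
  have hctC : c * t ∈ C := C.mul_mem_right t hcC
  have hctR : c * t ∈ R := hCR hctC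
  -- the relation c • t + (-(c*t)) • 1 = 0 in T
  set f : ULift.{0} (Fin 2) → ↥R := fun i => ![⟨c, hcR⟩, -⟨c * t, hctR⟩] i.down with hf
  set x : ULift.{0} (Fin 2) → T := fun i => ![t, 1] i.down with hx
  have hrel : ∑ i, f i • x i = 0 := by
    rw [sum_ulift_two]
    simp [hf, hx, Subring.smul_def, mul_comm]
  obtain ⟨κ, a, y, hxy, hfa⟩ :=
    Module.Flat.isTrivialRelation_of_sum_smul_eq_zero hrel
  -- for each j : (a ⟨0⟩ j : T) = t * (a ⟨1⟩ j : T)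
  have key : ∀ j, (a ⟨0⟩ j : T) = t * (a ⟨1⟩ j : T) := by
    intro j
    have h0 := hfa j
    rw [sum_ulift_two] at h0
    have h2 : c * (a ⟨0⟩ j : T) + (-(c * t)) * (a ⟨1⟩ j : T) = 0 := by
      have := congrArg (Subring.subtype R) h0
      simpa [hf] using this
    have h3 : ((a ⟨0⟩ j : T) - t * (a ⟨1⟩ j : T)) * c = 0 := by linear_combination h2
    have h4 := sub_eq_zero.mp ((mem_nonZeroDivisors_iff_right.mp hcreg) _ h3)
    linear_combination h4
  -- decompositions of t and 1
  have ht : t = ∑ j, (a ⟨0⟩ j : T) * y j := by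
    have := hxy ⟨0⟩
    simp only [hx] at this
    simpa [Subring.smul_def] using this
  have h1 : (1 : T) = ∑ j, (a ⟨1⟩ j : T) * y j := by
    have := hxy ⟨1⟩
    simp only [hx] at this
    simpa [Subring.smul_def] using this
  -- some a ⟨1⟩ j is not in C
  have hjex : ∃ j, (a ⟨1⟩ j : T) ∉ C := by
    by_contra h
    push_neg at h
    have h1C : (1 : T) ∈ C := by
      rw [h1]
      exact Ideal.sum_mem _ fun j _ => C.mul_mem_right _ (h j)
    apply hRT
    ext z
    simp only [Subring.mem_top, iff_true]
    have : z ∈ C := by simpa using C.mul_mem_right z h1C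
    exact hCR this
  obtain ⟨j, hj⟩ := hjex
  -- a ⟨1⟩ j is invertible mod the maximal ideal
  have hjM : a ⟨1⟩ j ∉ Ideal.comap (algebraMap ↥R T) C := by
    exact hj
  obtain ⟨u, m, hmM, hum⟩ := hmax.exists_inv hjM
  -- in T: u * (a ⟨1⟩ j) + m = 1
  have humT : (u : T) * (a ⟨1⟩ j : T) + (m : T) = 1 := by
    have := congrArg (Subring.subtype R) hum
    simpa using this
  have hmC : (m : T) ∈ C := by exact hmM
  -- t = u * (a ⟨0⟩ j) + t * m  ∈ R
  have htm : t * (m : T) ∈ R := hCR (C.mul_mem_left t hmC)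
  have hteq : t = (u : T) * (a ⟨0⟩ j : T) + t * (m : T) := by
    calc t = t * ((u : T) * (a ⟨1⟩ j : T) + (m : T)) := by rw [humT, mul_one]
    _ = (u : T) * (t * (a ⟨1⟩ j : T)) + t * (m : T) := by ring
    _ = (u : T) * (a ⟨0⟩ j : T) + t * (m : T) := by rw [← key j]
  apply htR
  rw [hteq]
  exact R.add_mem (R.mul_mem u.2 (a ⟨0⟩ j).2) htm
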